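/- For every nonnegative integer n, the number of integer triangles with perimeter p = 12n + 3 is T(12n+3) = 3n² + 3n + 1. -/

import Mathlib

/-- `T p` is the number of integer triangles with perimeter `p`:
unordered triples of positive integers `a ≤ b ≤ c` with `a + b + c = p`
and `c < a + b`. -/
noncomputable def T (p : ℕ) : ℕ :=
  Nat.card {t : ℕ × ℕ × ℕ //
    0 < t.1 ∧ t.1 ≤ t.2.1 ∧ t.2.1 ≤ t.2.2 ∧ t.2.2 < t.1 + t.2.1 ∧ t.1 + t.2.1 + t.2.2 = p}

open Finset

private lemma sum_odds' (n : ℕ) : ∑ k ∈ range n, (2 * k + 1) = n ^ 2 := by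
  induction n with
  | zero => simp
  | succ m ih => rw [Finset.sum_range_succ, ih]; ring

private lemma main_sum' (n : ℕ) :
    ∑ v ∈ range (3 * n + 1), (min v (6 * n - 2 * v) + 1) = 3 * n ^ 2 + 3 * n + 1 := by
  have hsplit : 3 * n + 1 = (2 * n + 1) + n := by ring
  rw [hsplit, Finset.sum_range_add]
  have h1 : ∑ v ∈ range (2 * n + 1), (min v (6 * n - 2 * v) + 1)
      = ∑ v ∈ range (2 * n + 1), (v + 1) := by
    apply Finset.sum_congr rfl
    intro v hv
    rw [Finset.mem_range] at hv
    omega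
  have h2 : ∑ i ∈ range n, (min (2 * n + 1 + i) (6 * n - 2 * (2 * n + 1 + i)) + 1)
      = ∑ i ∈ range n, (2 * (n - 1 - i) + 1) := by
    apply Finset.sum_congr rfl
    intro i hi
    rw [Finset.mem_range] at hi
    omega
  rw [h1, h2, Finset.sum_range_reflect (fun k => 2 * k + 1) n]
  · rw [sum_odds']
    have h3 : ∑ v ∈ range (2 * n + 2), v = ∑ v ∈ range (2 * n + 1), (v + 1) := by
      rw [Finset.sum_range_succ']
      simp
    rw [← h3]
    have h5 := Finset.sum_range_id_mul_two (2 * n + 2)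
    have h4 : 2 * n + 2 - 1 = 2 * n + 1 := by omega
    rw [h4] at h5
    nlinarith [h5]

private lemma cardA' (n : ℕ) :
    ((range (3 * n + 1) ×ˢ range (2 * n + 1)).filter
      (fun x : ℕ × ℕ => x.2 ≤ x.1 ∧ 2 * x.1 + x.2 ≤ 6 * n)).card
      = ∑ v ∈ range (3 * n + 1), (min v (6 * n - 2 * v) + 1) := by
  rw [Finset.card_eq_sum_card_fiberwise (f := Prod.fst) (t := range (3 * n + 1))]
  · apply Finset.sum_congr rfl
    intro v hv
    rw [Finset.mem_range] at hv
    rw [← Finset.card_range (min v (6 * n - 2 * v) + 1)]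
    apply Finset.card_bij (fun x _ => x.2)
    · intro x hx
      simp only [Finset.mem_filter, Finset.mem_product, Finset.mem_range] at hx ⊢
      omega
    · rintro ⟨x1, x2⟩ hx ⟨y1, y2⟩ hy hxy
      simp only [Finset.mem_filter, Finset.mem_product, Finset.mem_range] at hx hy
      simp only at hxy
      have : x1 = y1 := by omega
      simp [this, hxy]
    · intro w hw
      rw [Finset.mem_range, Nat.lt_succ_iff, le_min_iff] at hw
      refine ⟨(v, w), ?_, rfl⟩
      simp only [Finset.mem_filter, Finset.mem_product, Finset.mem_range, and_true]
      omega
  · intro x hx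
    simp only [Finset.mem_coe, Finset.mem_filter, Finset.mem_product, Finset.mem_range] at hx ⊢
    omega

private lemma equiv_step' (n : ℕ) :
    T (12 * n + 3) = ((range (3 * n + 1) ×ˢ range (2 * n + 1)).filter
      (fun x : ℕ × ℕ => x.2 ≤ x.1 ∧ 2 * x.1 + x.2 ≤ 6 * n)).card := by
  set A := (range (3 * n + 1) ×ˢ range (2 * n + 1)).filter
      (fun x : ℕ × ℕ => x.2 ≤ x.1 ∧ 2 * x.1 + x.2 ≤ 6 * n) with hA
  have memA : ∀ x : ℕ × ℕ, x ∈ A ↔ (x.2 ≤ x.1 ∧ 2 * x.1 + x.2 ≤ 6 * n) := by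
    intro x
    simp only [hA, Finset.mem_filter, Finset.mem_product, Finset.mem_range]
    omega
  have e : {t : ℕ × ℕ × ℕ //
      0 < t.1 ∧ t.1 ≤ t.2.1 ∧ t.2.1 ≤ t.2.2 ∧ t.2.2 < t.1 + t.2.1 ∧
        t.1 + t.2.1 + t.2.2 = 12 * n + 3} ≃ {x : ℕ × ℕ // x ∈ A} :=
    { toFun := fun t => ⟨(6 * n + 1 - t.1.2.1, 6 * n + 1 - t.1.2.2), by
        have h := t.2
        rw [memA]
        dsimp only
        omega⟩
      invFun := fun x => ⟨(x.1.1 + x.1.2 + 1, 6 * n + 1 - x.1.1, 6 * n + 1 - x.1.2), by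
        have h := x.2
        rw [memA] at h
        dsimp only
        omega⟩
      left_inv := fun t => by
        have h := t.2
        apply Subtype.ext
        obtain ⟨⟨a, b, c⟩, h⟩ := t
        simp only at h ⊢
        refine Prod.ext ?_ (Prod.ext ?_ ?_) <;> simp <;> omega
      right_inv := fun x => by
        have h := x.2
        rw [memA] at h
        apply Subtype.ext
        obtain ⟨⟨v, w⟩, _⟩ := x
        simp only at h ⊢
        refine Prod.ext ?_ ?_ <;> simp <;> omega }
  rw [T, Nat.card_congr e, Nat.card_eq_finsetCard]

theorem integer_triangles_perimeter_12n_plus_3 (n : ℕ) :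
    T (12 * n + 3) = 3 * n ^ 2 + 3 * n + 1 := by
  rw [equiv_step' n, cardA' n, main_sum' n]
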